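/- For 0 < q < p ≤ 1 and x ∈ [0,1], the (p,q)-Bernstein operator satisfies B_{n,p,q}(e₂, x) = x² + p^{n-1} x(1-x)/[n]_{p,q}, where e₂(t) = t². -/

import Mathlib

noncomputable section

/-- The (p,q)-number [n]_{p,q} = (p^n - q^n)/(p - q). -/
def pqNum (p q : ℝ) (n : ℕ) : ℝ := (p ^ n - q ^ n) / (p - q)

/-- The (p,q)-factorial [n]_{p,q}!. -/
def pqFactorial (p q : ℝ) (n : ℕ) : ℝ := ∏ k ∈ Finset.range n, pqNum p q (k + 1)

/-- The (p,q)-binomial coefficient. -/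
def pqBinom (p q : ℝ) (n k : ℕ) : ℝ :=
  pqFactorial p q n / (pqFactorial p q (n - k) * pqFactorial p q k)

/-- The (p,q)-power basis (a ⊖ b)^n_{p,q} = ∏_{j=0}^{n-1} (p^j a - q^j b). -/
def pqPow (p q a b : ℝ) (n : ℕ) : ℝ := ∏ j ∈ Finset.range n, (p ^ j * a - q ^ j * b)

/-- The (p,q)-derivative. -/
def pqDeriv (p q : ℝ) (f : ℝ → ℝ) (x : ℝ) : ℝ := (f (p * x) - f (q * x)) / ((p - q) * x)

/-- The (p,q)-integral of f over [0,1] (case 0 < q < p). -/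
def pqInt (p q : ℝ) (f : ℝ → ℝ) : ℝ :=
  (p - q) * ∑' k : ℕ, (q ^ k / p ^ (k + 1)) * f (q ^ k / p ^ (k + 1))

/-- The (p,q)-Beta function B_{p,q}(m,n) = ∫₀¹ x^{m-1} (1 ⊖ qx)^{n-1} d_{p,q}x. -/
def pqBeta (p q : ℝ) (m n : ℕ) : ℝ :=
  pqInt p q (fun x => x ^ (m - 1) * pqPow p q 1 (q * x) (n - 1))

/-- The (p,q)-Gamma function: Γ_{p,q}(n+1) = [n]_{p,q}!. -/
def pqGamma (p q : ℝ) (n : ℕ) : ℝ := pqFactorial p q (n - 1)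

/-- The (p,q)-Bernstein basis b_{n,k}^{p,q}(1,x). -/
def bBasis (p q : ℝ) (n k : ℕ) (x : ℝ) : ℝ :=
  pqBinom p q n k * p ^ (k * (k - 1) / 2) / p ^ (n * (n - 1) / 2) * x ^ k *
    pqPow p q 1 x (n - k)

/-- The kernel b_{n,k}^{p,q}(t) = [n choose k] t^k (1 ⊖ qt)^{n-k}. -/
def bKernel (p q : ℝ) (n k : ℕ) (t : ℝ) : ℝ :=
  pqBinom p q n k * t ^ k * pqPow p q 1 (q * t) (n - k)

/-- The (p,q)-Bernstein operator B_{n,p,q}(f,x). -/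
def pqBernstein (p q : ℝ) (n : ℕ) (f : ℝ → ℝ) (x : ℝ) : ℝ :=
  ∑ k ∈ Finset.range (n + 1),
    bBasis p q n k x * f (p ^ (n - k) * pqNum p q k / pqNum p q n)

/-- The (p,q)-Bernstein-Durrmeyer operator D_n^{p,q}(f,x). -/
def pqDurrmeyer (p q : ℝ) (n : ℕ) (f : ℝ → ℝ) (x : ℝ) : ℝ :=
  pqNum p q (n + 1) *
    ∑ k ∈ Finset.Icc 1 n, (p ^ ((n - k + 1) * (n + k) / 2))⁻¹ * bBasis p q n k x *
      pqInt p q (fun t => bKernel p q n (k - 1) t * f t)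
  + bBasis p q n 0 x * f 0

section Aux

variable {p q : ℝ}

lemma pqNum_zero' : pqNum p q 0 = 0 := by simp [pqNum]

lemma pqNum_one' (h : p ≠ q) : pqNum p q 1 = 1 := by
  unfold pqNum
  rw [pow_one, pow_one, div_self (sub_ne_zero.mpr h)]

lemma pqNum_add' (h : p ≠ q) (a b : ℕ) :
    pqNum p q (a + b) = p ^ a * pqNum p q b + q ^ b * pqNum p q a := by
  unfold pqNum
  rw [pow_add, pow_add]
  field_simp [sub_ne_zero.mpr h]
  ring

lemma pqNum_succ' (h : p ≠ q) (k : ℕ) :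
    pqNum p q (k + 1) = p ^ k + q * pqNum p q k := by
  rw [pqNum_add' h k 1, pqNum_one' h, pow_one]
  ring

lemma pqNum_pos' (hq : 0 < q) (hqp : q < p) {n : ℕ} (hn : n ≠ 0) :
    0 < pqNum p q n :=
  div_pos (sub_pos.mpr (pow_lt_pow_left₀ hqp hq.le hn)) (sub_pos.mpr hqp)

lemma pqFactorial_pos' (hq : 0 < q) (hqp : q < p) (n : ℕ) :
    0 < pqFactorial p q n :=
  Finset.prod_pos fun k _ => pqNum_pos' hq hqp (Nat.succ_ne_zero k)

lemma pqFactorial_succ' (n : ℕ) :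
    pqFactorial p q (n + 1) = pqFactorial p q n * pqNum p q (n + 1) :=
  Finset.prod_range_succ _ _

lemma pqBinom_zero' (hq : 0 < q) (hqp : q < p) (n : ℕ) : pqBinom p q n 0 = 1 := by
  unfold pqBinom
  simp [pqFactorial]
  exact ne_of_gt (pqFactorial_pos' hq hqp n)

lemma pqBinom_self' (hq : 0 < q) (hqp : q < p) (n : ℕ) : pqBinom p q n n = 1 := by
  unfold pqBinom
  simp [pqFactorial]
  exact ne_of_gt (pqFactorial_pos' hq hqp n)

lemma binom_mul' (hq : 0 < q) (hqp : q < p) (n k : ℕ) (hk : k ≤ n) :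
    pqBinom p q (n + 1) (k + 1) * pqNum p q (k + 1) =
      pqBinom p q n k * pqNum p q (n + 1) := by
  unfold pqBinom
  rw [Nat.succ_sub_succ, pqFactorial_succ' n, pqFactorial_succ' k]
  have h1 := ne_of_gt (pqFactorial_pos' (p := p) hq hqp (n - k))
  have h2 := ne_of_gt (pqFactorial_pos' (p := p) hq hqp k)
  have h3 := ne_of_gt (pqNum_pos' (p := p) hq hqp (Nat.succ_ne_zero k))
  field_simp

lemma pascal' (hq : 0 < q) (hqp : q < p) (n k : ℕ) (hk : k + 1 ≤ n) :
    pqBinom p q (n + 1) (k + 1) =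
      p ^ (k + 1) * pqBinom p q n (k + 1) + q ^ (n - k) * pqBinom p q n k := by
  obtain ⟨m, rfl⟩ : ∃ m, n = k + 1 + m := ⟨n - (k + 1), by omega⟩
  have e1 : k + 1 + m + 1 - (k + 1) = m + 1 := by omega
  have e2 : k + 1 + m - (k + 1) = m := by omega
  have e3 : k + 1 + m - k = m + 1 := by omega
  unfold pqBinom
  rw [e1, e2, e3, pqFactorial_succ' (k + 1 + m),
    show pqNum p q (k + 1 + m + 1) = p ^ (k + 1) * pqNum p q (m + 1)
        + q ^ (m + 1) * pqNum p q (k + 1) by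
      rw [show k + 1 + m + 1 = (k + 1) + (m + 1) from by omega,
        pqNum_add' (ne_of_gt hqp) (k + 1) (m + 1)],
    pqFactorial_succ' m, pqFactorial_succ' k]
  have h1 := ne_of_gt (pqFactorial_pos' (p := p) hq hqp m)
  have h2 := ne_of_gt (pqFactorial_pos' (p := p) hq hqp k)
  have h3 := ne_of_gt (pqNum_pos' (p := p) hq hqp (Nat.succ_ne_zero m))
  have h4 := ne_of_gt (pqNum_pos' (p := p) hq hqp (Nat.succ_ne_zero k))
  field_simp

lemma pqPow_succ' (x : ℝ) (m : ℕ) :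
    pqPow p q 1 x (m + 1) = pqPow p q 1 x m * (p ^ m - q ^ m * x) := by
  simp [pqPow, Finset.prod_range_succ]

lemma Tsucc (k : ℕ) : (k + 1) * k / 2 = k * (k - 1) / 2 + k := by
  have h : (k + 1) * k = k * (k - 1) + k * 2 := by
    cases k with
    | zero => rfl
    | succ m => simp [Nat.add_sub_cancel]; ring
  rw [h, Nat.add_mul_div_right _ _ (by norm_num : (0:ℕ) < 2)]

lemma master' (hq : 0 < q) (hqp : q < p) (n : ℕ) (x : ℝ) :
    ∑ k ∈ Finset.range (n + 1),
      pqBinom p q n k * p ^ (k * (k - 1) / 2) * x ^ k * pqPow p q 1 x (n - k)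
    = p ^ (n * (n - 1) / 2) := by
  induction n with
  | zero =>
    simp [pqBinom, pqFactorial, pqPow]
  | succ n ih =>
    set fA : ℕ → ℝ := fun k =>
      p ^ k * pqBinom p q n k * p ^ (k * (k - 1) / 2) * x ^ k
        * pqPow p q 1 x (n + 1 - k) with hfA
    set fB : ℕ → ℝ := fun k =>
      q ^ (n - k) * pqBinom p q n k * (p ^ (k * (k - 1) / 2) * p ^ k) * x ^ (k + 1)
        * pqPow p q 1 x (n - k) with hfB
    rw [Finset.sum_range_succ' (fun k => pqBinom p q (n + 1) k * p ^ (k * (k - 1) / 2)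
        * x ^ k * pqPow p q 1 x (n + 1 - k)) (n + 1),
      Finset.sum_range_succ (fun k => pqBinom p q (n + 1) (k + 1)
        * p ^ ((k + 1) * (k + 1 - 1) / 2) * x ^ (k + 1)
        * pqPow p q 1 x (n + 1 - (k + 1))) n]
    have hmid : ∀ k ∈ Finset.range n,
        pqBinom p q (n + 1) (k + 1) * p ^ ((k + 1) * (k + 1 - 1) / 2) * x ^ (k + 1)
          * pqPow p q 1 x (n + 1 - (k + 1)) = fA (k + 1) + fB k := by
      intro k hk
      have hk' : k + 1 ≤ n := Finset.mem_range.mp hk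
      rw [pascal' hq hqp n k hk']
      simp only [hfA, hfB, Nat.add_sub_cancel]
      have e1 : n + 1 - (k + 1) = n - k := by omega
      have e2 : (k + 1) * k / 2 = k * (k - 1) / 2 + k := Tsucc k
      rw [e1, e2, pow_add]
      ring
    rw [Finset.sum_congr rfl hmid, Finset.sum_add_distrib]
    have h1 : pqBinom p q (n + 1) 0 * p ^ (0 * (0 - 1) / 2) * x ^ 0
        * pqPow p q 1 x (n + 1 - 0) = fA 0 := by
      simp [hfA, pqBinom_zero' hq hqp]
    have h2 : pqBinom p q (n + 1) (n + 1) * p ^ ((n + 1) * (n + 1 - 1) / 2)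
        * x ^ (n + 1) * pqPow p q 1 x (n + 1 - (n + 1)) = fB n := by
      simp only [hfB, Nat.add_sub_cancel, Nat.sub_self]
      rw [pqBinom_self' hq hqp, pqBinom_self' hq hqp, Tsucc n, pow_add]
      ring
    rw [h1, h2]
    have eA : ∑ k ∈ Finset.range (n + 1), fA k
        = ∑ k ∈ Finset.range n, fA (k + 1) + fA 0 := Finset.sum_range_succ' fA n
    have eB : ∑ k ∈ Finset.range (n + 1), fB k
        = ∑ k ∈ Finset.range n, fB k + fB n := Finset.sum_range_succ fB n
    have hAB : ∀ k ∈ Finset.range (n + 1), fA k + fB k =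
        p ^ n * (pqBinom p q n k * p ^ (k * (k - 1) / 2) * x ^ k
          * pqPow p q 1 x (n - k)) := by
      intro k hk
      have hk' : k ≤ n := Nat.lt_succ_iff.mp (Finset.mem_range.mp hk)
      simp only [hfA, hfB]
      rw [show n + 1 - k = (n - k) + 1 by omega, pqPow_succ']
      have hpn : p ^ k * p ^ (n - k) = p ^ n := by
        rw [← pow_add]; congr 1; omega
      linear_combination (pqBinom p q n k * p ^ (k * (k - 1) / 2) * x ^ k
        * pqPow p q 1 x (n - k)) * hpn
    have total : (∑ k ∈ Finset.range (n + 1), fA k)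
        + (∑ k ∈ Finset.range (n + 1), fB k)
        = p ^ ((n + 1) * (n + 1 - 1) / 2) := by
      rw [← Finset.sum_add_distrib, Finset.sum_congr rfl hAB, ← Finset.mul_sum, ih,
        ← pow_add]
      congr 1
      rw [Nat.add_sub_cancel, Tsucc n]
      exact Nat.add_comm _ _
    linarith [eA, eB, total]

lemma sum_h' (hq : 0 < q) (hqp : q < p) (r : ℕ) (x : ℝ) :
    ∑ k ∈ Finset.range (r + 2),
      pqBinom p q (r + 1) k * pqNum p q k
        * p ^ (k * (k - 1) / 2 + k + 2 * (r + 1 - k)) * x ^ k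
        * pqPow p q 1 x (r + 1 - k)
    = pqNum p q (r + 1) * p ^ (2 * r + 1) * x * p ^ (r * (r - 1) / 2) := by
  rw [Finset.sum_range_succ']
  have h0 : pqBinom p q (r + 1) 0 * pqNum p q 0
      * p ^ (0 * (0 - 1) / 2 + 0 + 2 * (r + 1 - 0)) * x ^ 0
      * pqPow p q 1 x (r + 1 - 0) = 0 := by
    simp [pqNum_zero']
  rw [h0, add_zero]
  have hmid : ∀ k ∈ Finset.range (r + 1),
      pqBinom p q (r + 1) (k + 1) * pqNum p q (k + 1)
        * p ^ ((k + 1) * (k + 1 - 1) / 2 + (k + 1) + 2 * (r + 1 - (k + 1))) * x ^ (k + 1)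
        * pqPow p q 1 x (r + 1 - (k + 1))
      = pqNum p q (r + 1) * p ^ (2 * r + 1) * x
        * (pqBinom p q r k * p ^ (k * (k - 1) / 2) * x ^ k * pqPow p q 1 x (r - k)) := by
    intro k hk
    have hk' : k ≤ r := Nat.lt_succ_iff.mp (Finset.mem_range.mp hk)
    rw [binom_mul' hq hqp r k hk']
    have e1 : r + 1 - (k + 1) = r - k := by omega
    have e2 : (k + 1) * (k + 1 - 1) / 2 + (k + 1) + 2 * (r - k)
        = k * (k - 1) / 2 + (2 * r + 1) := by
      rw [Nat.add_sub_cancel, Tsucc k]; omega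
    rw [e1, e2, pow_add]
    ring
  rw [Finset.sum_congr rfl hmid, ← Finset.mul_sum, master' hq hqp r x]

lemma sum_e2' (hq : 0 < q) (hqp : q < p) (n : ℕ) (hn : 1 ≤ n) (x : ℝ) :
    ∑ k ∈ Finset.range (n + 1),
      pqBinom p q n k * p ^ (k * (k - 1) / 2) * x ^ k * pqPow p q 1 x (n - k)
        * (p ^ (n - k) * pqNum p q k / pqNum p q n) ^ 2
    = p ^ (n * (n - 1) / 2) * (x ^ 2 + p ^ (n - 1) * x * (1 - x) / pqNum p q n) := by
  obtain ⟨m, rfl⟩ : ∃ m, n = m + 1 := ⟨n - 1, by omega⟩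
  have hNm1 := pqNum_pos' (p := p) hq hqp (Nat.succ_ne_zero m)
  have hNm1' := ne_of_gt hNm1
  rw [Finset.sum_range_succ']
  have h0 : pqBinom p q (m + 1) 0 * p ^ (0 * (0 - 1) / 2) * x ^ 0
      * pqPow p q 1 x (m + 1 - 0)
      * (p ^ (m + 1 - 0) * pqNum p q 0 / pqNum p q (m + 1)) ^ 2 = 0 := by
    simp [pqNum_zero']
  rw [h0, add_zero]
  have hmid : ∀ k ∈ Finset.range (m + 1),
      pqBinom p q (m + 1) (k + 1) * p ^ ((k + 1) * (k + 1 - 1) / 2) * x ^ (k + 1)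
        * pqPow p q 1 x (m + 1 - (k + 1))
        * (p ^ (m + 1 - (k + 1)) * pqNum p q (k + 1) / pqNum p q (m + 1)) ^ 2
      = (p ^ (2 * m) / pqNum p q (m + 1)) * x
          * (pqBinom p q m k * p ^ (k * (k - 1) / 2) * x ^ k * pqPow p q 1 x (m - k))
        + (q / pqNum p q (m + 1)) * x
          * (pqBinom p q m k * pqNum p q k
              * p ^ (k * (k - 1) / 2 + k + 2 * (m - k)) * x ^ k
              * pqPow p q 1 x (m - k)) := by
    intro k hk
    have hk' : k ≤ m := Nat.lt_succ_iff.mp (Finset.mem_range.mp hk)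
    have e1 : m + 1 - (k + 1) = m - k := by omega
    have key : pqBinom p q (m + 1) (k + 1) * pqNum p q (k + 1) ^ 2
        = pqNum p q (m + 1) * (pqBinom p q m k * p ^ k
            + q * (pqBinom p q m k * pqNum p q k)) := by
      have h1 := binom_mul' hq hqp m k hk'
      have h2 := pqNum_succ' (ne_of_gt hqp) k
      calc pqBinom p q (m + 1) (k + 1) * pqNum p q (k + 1) ^ 2
          = (pqBinom p q (m + 1) (k + 1) * pqNum p q (k + 1)) * pqNum p q (k + 1) := by
            ring
        _ = (pqBinom p q m k * pqNum p q (m + 1)) * (p ^ k + q * pqNum p q k) := by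
            rw [h1, h2]
        _ = _ := by ring
    have e2 : (k + 1) * (k + 1 - 1) / 2 = k * (k - 1) / 2 + k := by
      rw [Nat.add_sub_cancel]; exact Tsucc k
    rw [e1, e2]
    have hp0 : (0:ℝ) < p := lt_trans hq hqp
    rw [show 2 * m = k + (k + (m - k) * 2) from by omega,
      show k * (k - 1) / 2 + k + 2 * (m - k) = k * (k - 1) / 2 + k + (m - k) * 2
        from by omega]
    simp only [pow_add, pow_mul, pow_one]
    field_simp
    linear_combination (x * x ^ k * pqPow p q 1 x (m - k)) * key
  rw [Finset.sum_congr rfl hmid, Finset.sum_add_distrib, ← Finset.mul_sum,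
    ← Finset.mul_sum, master' hq hqp m x]
  cases m with
  | zero =>
    rw [show pqNum p q (0 + 1) = 1 from pqNum_one' (ne_of_gt hqp)]
    simp [pqNum_zero']
    ring
  | succ r =>
    rw [sum_h' hq hqp r x]
    have hp0 : (0:ℝ) < p := lt_trans hq hqp
    simp only [Nat.add_sub_cancel]
    have e1 : (r + 1 + 1) * (r + 1) / 2 = r * (r - 1) / 2 + (2 * r + 1) := by
      rw [Tsucc (r + 1), Nat.add_sub_cancel, Tsucc r]; omega
    have e2 : (r + 1) * r / 2 = r * (r - 1) / 2 + r := Tsucc r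
    rw [e1, e2]
    rw [show pqNum p q (r + 1 + 1) = p ^ (r + 1) + q * pqNum p q (r + 1) from
      pqNum_succ' (ne_of_gt hqp) (r + 1)]
    rw [show 2 * (r + 1) = r + r + 1 + 1 from by ring,
      show 2 * r + 1 = r + r + 1 from by ring]
    simp only [pow_add, pow_one]
    have hden : p ^ r * p + q * pqNum p q (r + 1) ≠ 0 := by
      have h := hNm1'
      rwa [show pqNum p q (r + 1 + 1) = p ^ (r + 1) + q * pqNum p q (r + 1) from
        pqNum_succ' (ne_of_gt hqp) (r + 1), pow_succ] at h
    field_simp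
    ring

end Aux

theorem pqBernstein_e2 (p q : ℝ) (hq : 0 < q) (hqp : q < p) (hp : p ≤ 1)
    (n : ℕ) (hn : 1 ≤ n) (x : ℝ) (hx : x ∈ Set.Icc (0 : ℝ) 1) :
    pqBernstein p q n (fun t => t ^ 2) x =
      x ^ 2 + p ^ (n - 1) * x * (1 - x) / pqNum p q n := by
  have hp0 : (0:ℝ) < p := lt_trans hq hqp
  have hTn : (p : ℝ) ^ (n * (n - 1) / 2) ≠ 0 := pow_ne_zero _ (ne_of_gt hp0)
  unfold pqBernstein bBasis
  have step : ∑ k ∈ Finset.range (n + 1),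
      pqBinom p q n k * p ^ (k * (k - 1) / 2) / p ^ (n * (n - 1) / 2) * x ^ k *
        pqPow p q 1 x (n - k) *
        (fun t => t ^ 2) (p ^ (n - k) * pqNum p q k / pqNum p q n)
      = (p ^ (n * (n - 1) / 2))⁻¹ *
        ∑ k ∈ Finset.range (n + 1),
          pqBinom p q n k * p ^ (k * (k - 1) / 2) * x ^ k * pqPow p q 1 x (n - k)
            * (p ^ (n - k) * pqNum p q k / pqNum p q n) ^ 2 := by
    rw [Finset.mul_sum]
    refine Finset.sum_congr rfl fun k _ => ?_
    simp only []
    ring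
  rw [step, sum_e2' hq hqp n hn x, ← mul_assoc,
    inv_mul_cancel₀ hTn, one_mul]
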